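/- Let T be the set of finite or infinite words over the alphabet 3 = {0,1,2} such that every finite prefix contains at most as many occurrences of the letter 2 as of the letter 1, and let s ↦ s^↩ be the erasing operation on finite words of T (∅^↩ := ∅; (tε)^↩ := t^↩ε for ε ∈ {0,1}; (t2)^↩ := t^↩ with its last 1 replaced by 0). For infinite α ∈ T define α^↩ := lim_n (α↾n)^↩, where for finite binary t and a sequence (s_n) of finite binary words, t ≺ lim_n s_n iff t is a prefix of s_n for all sufficiently large n. Then for every finite s ∈ T and every infinite β ∈ T one has (sβ)^↩ = s^↩ β^↩ (concatenation of the finite word s^↩ with the infinite word β^↩). -/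

import Mathlib

open Set Classical

/-- The prefix of length `l` of an infinite word. -/
def wordPrefix {α : Type*} (x : ℕ → α) (l : ℕ) : List α := List.ofFn fun i : Fin l => x i.val

/-- `T ∩ 3^{<ω}`: finite words over `3 = {0,1,2}` all of whose prefixes contain at most as
many `2`s as `1`s. -/
def Tfin : Set (List (Fin 3)) :=
  { s | ∀ l : ℕ, (s.take l).count 2 ≤ (s.take l).count 1 }

/-- `T ∩ 3^ω`: infinite words over `3 = {0,1,2}` all of whose finite prefixes contain at
most as many `2`s as `1`s. -/
def Tinf : Set (ℕ → Fin 3) :=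
  { α | ∀ l : ℕ, (wordPrefix α l).count 2 ≤ (wordPrefix α l).count 1 }

/-- Replace the first occurrence of `1` (i.e. `true`) in a binary word by `0`. -/
def replaceFirstOne : List Bool → List Bool
  | [] => []
  | true :: t => false :: t
  | false :: t => false :: replaceFirstOne t

/-- Replace the last occurrence of `1` (i.e. `true`) in a binary word by `0`. -/
def replaceLastOne (l : List Bool) : List Bool := (replaceFirstOne l.reverse).reverse

/-- One step of the erasing operation: appending a letter `ε ∈ {0,1}` appends it to the
erased word, while appending the letter `2` replaces the last `1` of the erased word by `0`. -/
def eraseStep (acc : List Bool) (a : Fin 3) : List Bool :=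
  if a = 2 then replaceLastOne acc else acc ++ [decide (a = 1)]

/-- The erasing operation `s ↦ s^↩` on finite words over `3 = {0,1,2}` (letters `0`,`1` of
the binary output are encoded as `false`,`true`): `∅^↩ = ∅`, `(tε)^↩ = t^↩ε` for `ε ∈ {0,1}`,
and `(t2)^↩ = t^↩` with its last `1` replaced by `0`. -/
def eraseWord (s : List (Fin 3)) : List Bool := s.foldl eraseStep []

/-- `t` is a (finite) prefix of the infinite word `x`. -/
def InfPrefix {α : Type*} (t : List α) (x : ℕ → α) : Prop :=
  ∀ i : Fin t.length, t.get i = x i.val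

/-- The infinite word `x` is the limit of the sequence of finite words `s`: a finite word
is a prefix of `x` iff it is a prefix of `s m` for all sufficiently large `m`. -/
def IsLimitOf (x : ℕ → Bool) (s : ℕ → List Bool) : Prop :=
  ∀ t : List Bool, InfPrefix t x ↔ ∀ᶠ m in Filter.atTop, t <+: s m

/-- The erasure `e(α) := lim_n (α↾n)^↩` of an infinite word over `3 = {0,1,2}` (an arbitrary
value is returned if the limit does not exist; for `α ∈ T ∩ 3^ω` it always exists). -/
noncomputable def eMap (α : ℕ → Fin 3) : ℕ → Bool :=
  if h : ∃ x : ℕ → Bool, IsLimitOf x (fun m => eraseWord (wordPrefix α m)) then h.choose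
  else fun _ => false

/-- Concatenation of a finite word with an infinite word. -/
def catInf {α : Type*} (s : List α) (x : ℕ → α) : ℕ → α := fun n =>
  if h : n < s.length then s.get ⟨n, h⟩ else x (n - s.length)

-- ## Auxiliary lemmas

open Filter List

lemma wordPrefix_length {α : Type*} (x : ℕ → α) (l : ℕ) : (wordPrefix x l).length = l := by
  simp [wordPrefix]

lemma wordPrefix_getElem {α : Type*} (x : ℕ → α) (l i : ℕ) (h : i < (wordPrefix x l).length) :
    (wordPrefix x l)[i] = x i := by
  simp [wordPrefix]

lemma wordPrefix_succ {α : Type*} (x : ℕ → α) (l : ℕ) :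
    wordPrefix x (l + 1) = wordPrefix x l ++ [x l] := by
  rw [wordPrefix, List.ofFn_succ', List.concat_eq_append]
  rfl

lemma eraseWord_append (u v : List (Fin 3)) :
    eraseWord (u ++ v) = v.foldl eraseStep (eraseWord u) := by
  simp [eraseWord, List.foldl_append]

lemma eraseWord_concat (u : List (Fin 3)) (a : Fin 3) :
    eraseWord (u ++ [a]) = eraseStep (eraseWord u) a := by
  simp [eraseWord_append]

lemma replaceFirstOne_length (l : List Bool) : (replaceFirstOne l).length = l.length := by
  induction l with
  | nil => rfl
  | cons a t ih => cases a <;> simp [replaceFirstOne, ih]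

lemma replaceLastOne_length (l : List Bool) : (replaceLastOne l).length = l.length := by
  simp [replaceLastOne, replaceFirstOne_length]

lemma replaceFirstOne_getD (l : List Bool) (n : ℕ) :
    (replaceFirstOne l).getD n false ≤ l.getD n false := by
  induction l generalizing n with
  | nil => simp [replaceFirstOne]
  | cons a t ih =>
    cases a with
    | true => cases n <;> simp [replaceFirstOne]
    | false =>
      cases n with
      | zero => simp [replaceFirstOne]
      | succ k => simpa [replaceFirstOne] using ih k

lemma getD_reverse (l : List Bool) (n : ℕ) (h : n < l.length) :
    l.reverse.getD n false = l.getD (l.length - 1 - n) false := by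
  rw [List.getD_eq_getElem _ _ (by simpa using h),
    List.getD_eq_getElem _ _ (by omega), List.getElem_reverse]

lemma replaceLastOne_getD (l : List Bool) (n : ℕ) :
    (replaceLastOne l).getD n false ≤ l.getD n false := by
  by_cases h : n < l.length
  · have h' : n < (replaceLastOne l).length := by rwa [replaceLastOne_length]
    rw [replaceLastOne, getD_reverse _ _ (by simpa [replaceFirstOne_length] using h)]
    rw [replaceFirstOne_length, List.length_reverse]
    have h2 : l.length - 1 - n < l.reverse.length := by simp; omega
    calc (replaceFirstOne l.reverse).getD (l.length - 1 - n) false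
        ≤ l.reverse.getD (l.length - 1 - n) false := replaceFirstOne_getD _ _
      _ = l.getD n false := by
          rw [getD_reverse _ _ (by simpa using h2)]
          congr 1
          omega
  · rw [List.getD_eq_default _ _ (by rw [replaceLastOne_length]; omega)]
    simp

lemma eraseStep_length_le (acc : List Bool) (a : Fin 3) :
    acc.length ≤ (eraseStep acc a).length := by
  unfold eraseStep
  split
  · rw [replaceLastOne_length]
  · simp

lemma eraseStep_getD (acc : List Bool) (a : Fin 3) (n : ℕ) (h : n < acc.length) :
    (eraseStep acc a).getD n false ≤ acc.getD n false := by
  unfold eraseStep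
  split
  · exact replaceLastOne_getD acc n
  · rw [List.getD_eq_getElem _ _ (by simp; omega), List.getD_eq_getElem _ _ h]
    simp [List.getElem_append, h]
-- Tfin closure under prefixes
lemma Tfin_of_prefix {t u : List (Fin 3)} (h : t <+: u) (hu : u ∈ Tfin) : t ∈ Tfin := by
  intro l
  have ht : t = u.take t.length := List.prefix_iff_eq_take.1 h
  rw [ht, List.take_take]
  exact hu _

lemma Tfin_of_concat {u : List (Fin 3)} {a : Fin 3} (h : u ++ [a] ∈ Tfin) : u ∈ Tfin :=
  Tfin_of_prefix ⟨[a], rfl⟩ h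

lemma count_one_add_count_two_le (l : List (Fin 3)) : l.count 1 + l.count 2 ≤ l.length := by
  induction l with
  | nil => simp
  | cons a t ih =>
    fin_cases a <;> simp [List.count_cons] <;> omega

lemma replaceFirstOne_count {l : List Bool} (h : true ∈ l) :
    (replaceFirstOne l).count true + 1 = l.count true := by
  induction l with
  | nil => simp at h
  | cons a t ih =>
    cases a with
    | true => simp [replaceFirstOne, List.count_cons]
    | false =>
      have ht : true ∈ t := by simpa using h
      simp only [replaceFirstOne, List.count_cons]
      simp [ih ht]

lemma replaceLastOne_count {l : List Bool} (h : true ∈ l) :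
    (replaceLastOne l).count true + 1 = l.count true := by
  have : (replaceFirstOne l.reverse).count true + 1 = l.reverse.count true :=
    replaceFirstOne_count (by simpa using h)
  simpa [replaceLastOne] using this

lemma replaceFirstOne_append {l r : List Bool} (h : true ∈ l) :
    replaceFirstOne (l ++ r) = replaceFirstOne l ++ r := by
  induction l with
  | nil => simp at h
  | cons a t ih =>
    cases a with
    | true => simp [replaceFirstOne]
    | false =>
      have ht : true ∈ t := by simpa using h
      simp [replaceFirstOne, ih ht]

lemma replaceLastOne_append {w : List Bool} (acc : List Bool) (h : true ∈ w) :
    replaceLastOne (acc ++ w) = acc ++ replaceLastOne w := by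
  unfold replaceLastOne
  rw [List.reverse_append, replaceFirstOne_append (by simpa using h), List.reverse_append,
    List.reverse_reverse]

/-- count of `true` in the erased word. -/
lemma eraseWord_count {u : List (Fin 3)} (hu : u ∈ Tfin) :
    (eraseWord u).count true + u.count 2 = u.count 1 := by
  induction u using List.reverseRecOn with
  | nil => simp [eraseWord]
  | append_singleton v a ih =>
    have hv : v ∈ Tfin := Tfin_of_concat hu
    have ihv := ih hv
    rw [eraseWord_concat]
    by_cases ha : a = 2
    · subst ha
      have hcount : v.count 2 + 1 ≤ v.count 1 := by
        have := hu (v.length + 1)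
        rw [List.take_of_length_le (by simp)] at this
        simpa [List.count_append] using this
      have hmem : true ∈ eraseWord v := by
        rw [← List.count_pos_iff]
        omega
      have h2 := replaceLastOne_count hmem
      simp [eraseStep, List.count_append, List.count_cons]
      omega
    · fin_cases a
      · simp [eraseStep, List.count_append, List.count_cons]
        omega
      · simp [eraseStep, List.count_append, List.count_cons]
        omega
      · simp at ha

/-- `true ∈ eraseWord v` whenever `v ++ [2] ∈ Tfin`. -/
lemma true_mem_eraseWord {v : List (Fin 3)} (h : v ++ [2] ∈ Tfin) : true ∈ eraseWord v := by
  have hv : v ∈ Tfin := Tfin_of_concat h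
  have hcount : v.count 2 + 1 ≤ v.count 1 := by
    have := h (v.length + 1)
    rw [List.take_of_length_le (by simp)] at this
    simpa [List.count_append] using this
  have := eraseWord_count hv
  rw [← List.count_pos_iff]
  omega

/-- Key distributivity: folding a word of `Tfin` over any accumulator appends its erasure. -/
lemma foldl_eraseStep_eq {u : List (Fin 3)} (hu : u ∈ Tfin) (acc : List Bool) :
    u.foldl eraseStep acc = acc ++ eraseWord u := by
  induction u using List.reverseRecOn generalizing acc with
  | nil => simp [eraseWord]
  | append_singleton v a ih =>
    have hv : v ∈ Tfin := Tfin_of_concat hu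
    rw [List.foldl_append, ih hv, eraseWord_concat]
    simp only [List.foldl_cons, List.foldl_nil]
    unfold eraseStep
    by_cases ha : a = 2
    · subst ha
      rw [if_pos rfl, if_pos rfl, replaceLastOne_append acc (true_mem_eraseWord hu)]
    · rw [if_neg ha, if_neg ha, List.append_assoc]

lemma eraseWord_append_of_Tfin {u v : List (Fin 3)} (hv : v ∈ Tfin) :
    eraseWord (u ++ v) = eraseWord u ++ eraseWord v := by
  rw [eraseWord_append, foldl_eraseStep_eq hv]

/-- length of erased word. -/
lemma eraseWord_length (u : List (Fin 3)) :
    (eraseWord u).length + u.count 2 = u.length := by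
  induction u using List.reverseRecOn with
  | nil => simp [eraseWord]
  | append_singleton v a ih =>
    rw [eraseWord_concat]
    fin_cases a
    · simp [eraseStep, List.count_append, List.count_cons]
      omega
    · simp [eraseStep, List.count_append, List.count_cons]
      omega
    · simp [eraseStep, replaceLastOne_length, List.count_append, List.count_cons]
      omega

lemma infPrefix_wordPrefix {α : Type*} (x : ℕ → α) (l : ℕ) : InfPrefix (wordPrefix x l) x := by
  intro i
  rw [List.get_eq_getElem, wordPrefix_getElem]

lemma isLimitOf_unique {x y : ℕ → Bool} {s : ℕ → List Bool}
    (hx : IsLimitOf x s) (hy : IsLimitOf y s) : x = y := by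
  funext n
  have e1 := (hx _).1 (infPrefix_wordPrefix x (n + 1))
  have e2 := (hy _).1 (infPrefix_wordPrefix y (n + 1))
  obtain ⟨m, hm1, hm2⟩ := (e1.and e2).exists
  have hlen : (wordPrefix x (n+1)).length = (wordPrefix y (n+1)).length := by
    simp [wordPrefix_length]
  have heq : wordPrefix x (n+1) = wordPrefix y (n+1) :=
    (List.prefix_of_prefix_length_le hm1 hm2 (le_of_eq hlen)).eq_of_length hlen
  have h1 : n < (wordPrefix x (n+1)).length := by rw [wordPrefix_length]; omega
  have h2 : n < (wordPrefix y (n+1)).length := by rw [wordPrefix_length]; omega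
  have : (wordPrefix x (n+1))[n]'h1 = (wordPrefix y (n+1))[n]'h2 := by
    congr 1
  simpa [wordPrefix_getElem] using this

lemma wordPrefix_prefix {α : Type*} (x : ℕ → α) {l l' : ℕ} (h : l ≤ l') :
    wordPrefix x l <+: wordPrefix x l' := by
  induction l' with
  | zero =>
    interval_cases l
    exact List.prefix_refl _
  | succ k ih =>
    rcases Nat.lt_or_ge l (k + 1) with h' | h'
    · exact (ih (by omega)).trans (by rw [wordPrefix_succ]; exact ⟨[x k], rfl⟩)
    · have : l = k + 1 := by omega
      subst this
      exact List.prefix_refl _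

lemma wordPrefix_mem_Tfin {γ : ℕ → Fin 3} (hγ : γ ∈ Tinf) (l : ℕ) :
    wordPrefix γ l ∈ Tfin := by
  intro j
  have htake : (wordPrefix γ l).take j = wordPrefix γ (min j l) := by
    rcases le_total j l with h | h
    · have hp := wordPrefix_prefix γ h
      rw [List.prefix_iff_eq_take, wordPrefix_length] at hp
      rw [← hp, min_eq_left h]
    · rw [List.take_of_length_le (by rw [wordPrefix_length]; exact h), min_eq_right h]
  rw [htake]
  exact hγ (min j l)

lemma eraseWord_prefix_mono {γ : ℕ → Fin 3} {m m' : ℕ} (h : m ≤ m') :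
    (eraseWord (wordPrefix γ m)).length ≤ (eraseWord (wordPrefix γ m')).length ∧
    ∀ n < (eraseWord (wordPrefix γ m)).length,
      (eraseWord (wordPrefix γ m')).getD n false ≤ (eraseWord (wordPrefix γ m)).getD n false := by
  induction m', h using Nat.le_induction with
  | base => exact ⟨le_rfl, fun n _ => le_rfl⟩
  | succ k hk ih =>
    have hstep : eraseWord (wordPrefix γ (k + 1)) = eraseStep (eraseWord (wordPrefix γ k)) (γ k) := by
      rw [wordPrefix_succ, eraseWord_concat]
    constructor
    · rw [hstep]
      exact ih.1.trans (eraseStep_length_le _ _)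
    · intro n hn
      rw [hstep]
      exact (eraseStep_getD _ _ n (lt_of_lt_of_le hn ih.1)).trans (ih.2 n hn)

lemma eraseWord_wordPrefix_length_lt {γ : ℕ → Fin 3} (hγ : γ ∈ Tinf) (n : ℕ) :
    n < (eraseWord (wordPrefix γ (2 * n + 2))).length := by
  have h1 := eraseWord_length (wordPrefix γ (2 * n + 2))
  have h2 := hγ (2 * n + 2)
  have h3 := count_one_add_count_two_le (wordPrefix γ (2 * n + 2))
  rw [wordPrefix_length] at h1 h3
  omega

lemma exists_limit {γ : ℕ → Fin 3} (hγ : γ ∈ Tinf) :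
    ∃ x : ℕ → Bool, IsLimitOf x (fun m => eraseWord (wordPrefix γ m)) := by
  classical
  set f : ℕ → List Bool := fun m => eraseWord (wordPrefix γ m) with hf
  set x : ℕ → Bool := fun n => decide (∀ m, n < (f m).length → (f m).getD n false = true)
    with hxdef
  refine ⟨x, ?_⟩
  have stab : ∀ n, ∃ M, ∀ m, M ≤ m → n < (f m).length ∧ (f m).getD n false = x n := by
    intro n
    by_cases hP : ∀ m, n < (f m).length → (f m).getD n false = true
    · refine ⟨2 * n + 2, fun m hm => ?_⟩
      have hlen : n < (f m).length :=
        lt_of_lt_of_le (eraseWord_wordPrefix_length_lt hγ n) (eraseWord_prefix_mono hm).1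
      refine ⟨hlen, ?_⟩
      rw [hP m hlen, hxdef]
      simp only [decide_eq_true_eq]
      exact (decide_eq_true hP).symm
    · have hx : x n = false := by
        rw [hxdef]
        simpa using hP
      push_neg at hP
      obtain ⟨m1, hm1len, hm1⟩ := hP
      refine ⟨m1, fun m hm => ?_⟩
      have hmono := eraseWord_prefix_mono (γ := γ) hm
      have hlen : n < (f m).length := lt_of_lt_of_le hm1len hmono.1
      have hle : (f m).getD n false ≤ (f m1).getD n false := hmono.2 n hm1len
      have h1 : (f m1).getD n false = false := Bool.not_eq_true _ |>.mp hm1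
      refine ⟨hlen, ?_⟩
      rw [hx]
      rw [h1] at hle
      exact le_antisymm hle (Bool.false_le _)
  intro t
  constructor
  · intro ht
    choose M hM using stab
    refine Filter.eventually_atTop.2 ⟨(Finset.range t.length).sup M, fun m hm => ?_⟩
    have hmem : ∀ i, i < t.length → M i ≤ m := fun i hi =>
      le_trans (Finset.le_sup (Finset.mem_range.2 hi)) hm
    have hlen : t.length ≤ (f m).length := by
      rcases Nat.eq_zero_or_pos t.length with h0 | h0
      · omega
      · have := (hM (t.length - 1) m (hmem _ (by omega))).1
        omega
    rw [List.prefix_iff_eq_take]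
    apply List.ext_getElem
    · rw [List.length_take]
      omega
    · intro i h1 h2
      have hMi := hM i m (hmem i h1)
      have hti : t[i] = x i := by
        have := ht ⟨i, h1⟩
        simpa using this
      rw [List.getElem_take, hti, ← hMi.2, List.getD_eq_getElem _ _ hMi.1]
  · intro ht i
    obtain ⟨M, hM⟩ := stab i.val
    obtain ⟨m, hm1, hm2⟩ := (ht.and (Filter.eventually_ge_atTop M)).exists
    have hMm := hM m hm2
    have heq : t = (f m).take t.length := List.prefix_iff_eq_take.1 hm1
    have hlen : i.val < (f m).length := by
      have : t.length ≤ (f m).length := hm1.length_le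
      omega
    rw [List.get_eq_getElem]
    rw [List.getD_eq_getElem _ _ hMm.1] at hMm
    rw [hm1.getElem i.isLt]
    exact hMm.2

lemma eventually_sub_const {P : ℕ → Prop} (c : ℕ) :
    (∀ᶠ m in Filter.atTop, P (m - c)) ↔ ∀ᶠ k in Filter.atTop, P k := by
  simp only [Filter.eventually_atTop]
  constructor
  · rintro ⟨N, hN⟩
    exact ⟨N, fun k hk => by simpa using hN (k + c) (by omega)⟩
  · rintro ⟨N, hN⟩
    exact ⟨N + c, fun m hm => hN _ (by omega)⟩

lemma catInf_lt {α : Type*} (w : List α) (x : ℕ → α) {n : ℕ} (h : n < w.length) :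
    catInf w x n = w[n] := by
  simp [catInf, h]

lemma catInf_ge {α : Type*} (w : List α) (x : ℕ → α) {n : ℕ} (h : w.length ≤ n) :
    catInf w x n = x (n - w.length) := by
  simp [catInf, Nat.not_lt.2 h]

lemma infPrefix_get {t : List Bool} {x : ℕ → Bool} (h : InfPrefix t x) (n : ℕ)
    (hn : n < t.length) : t[n] = x n := by
  have := h ⟨n, hn⟩
  rwa [List.get_eq_getElem] at this

lemma infPrefix_catInf_short {t w : List Bool} {x : ℕ → Bool} (h : t.length ≤ w.length) :
    InfPrefix t (catInf w x) ↔ t <+: w := by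
  constructor
  · intro h'
    rw [List.prefix_iff_eq_take]
    apply List.ext_getElem
    · rw [List.length_take]; omega
    · intro i h1 h2
      have := h' ⟨i, h1⟩
      rw [List.get_eq_getElem] at this
      rw [this, List.getElem_take, catInf_lt w x (by omega)]
  · intro h'
    intro i
    rw [List.get_eq_getElem, catInf_lt w x (by have := i.isLt; omega),
      h'.getElem i.isLt]

lemma infPrefix_catInf_long {t w : List Bool} {x : ℕ → Bool} (h : w.length ≤ t.length) :
    InfPrefix t (catInf w x) ↔ w <+: t ∧ InfPrefix (t.drop w.length) x := by
  constructor
  · intro h'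
    constructor
    · rw [List.prefix_iff_eq_take]
      apply List.ext_getElem
      · rw [List.length_take]; omega
      · intro i h1 h2
        have := h' ⟨i, by omega⟩
        rw [List.get_eq_getElem] at this
        rw [List.getElem_take, this, catInf_lt w x h1]
    · intro j
      have heq : (t.drop w.length).length = t.length - w.length := List.length_drop
      have hjl := j.isLt
      have h3 : w.length + (j : ℕ) < t.length := by omega
      rw [List.get_eq_getElem, List.getElem_drop]
      rw [infPrefix_get h' (w.length + (j : ℕ)) h3, catInf_ge w x (by omega)]
      congr 1
      omega
  · rintro ⟨hw, hd⟩
    intro i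
    have hi := i.isLt
    rw [List.get_eq_getElem]
    rcases Nat.lt_or_ge i.val w.length with h1 | h1
    · rw [catInf_lt w x h1, ← hw.getElem h1]
    · rw [catInf_ge w x h1]
      have heq : (t.drop w.length).length = t.length - w.length := List.length_drop
      have hj : i.val - w.length < (t.drop w.length).length := by omega
      have h3 : (t.drop w.length)[i.val - w.length] = x (i.val - w.length) :=
        infPrefix_get hd _ hj
      rw [List.getElem_drop] at h3
      have h4 : t[(i : ℕ)] = t[w.length + (i.val - w.length)]'(by omega) := by
        congr 1
        omega
      rw [h4, h3]

lemma prefix_append_short {t w r : List Bool} (h : t.length ≤ w.length) :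
    t <+: w ++ r ↔ t <+: w := by
  constructor
  · intro h'
    have := List.prefix_iff_eq_take.1 h'
    rw [List.take_append_of_le_length h] at this
    rw [this]
    exact List.take_prefix _ _
  · intro h'
    exact h'.trans (w.prefix_append r)

lemma prefix_append_long {t w r : List Bool} (h : w.length ≤ t.length) :
    t <+: w ++ r ↔ w <+: t ∧ t.drop w.length <+: r := by
  constructor
  · intro h'
    have hw : w <+: t := List.prefix_of_prefix_length_le (w.prefix_append r) h' h
    refine ⟨hw, ?_⟩
    have ht : t = w ++ t.drop w.length := by
      conv_lhs => rw [← List.take_append_drop w.length t]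
      rw [← List.prefix_iff_eq_take.1 hw]
    rw [ht] at h'
    exact (List.prefix_append_right_inj w).1 h'
  · rintro ⟨hw, hd⟩
    have ht : t = w ++ t.drop w.length := by
      conv_lhs => rw [← List.take_append_drop w.length t]
      rw [← List.prefix_iff_eq_take.1 hw]
    rw [ht]
    exact (List.prefix_append_right_inj w).2 hd

lemma isLimitOf_cat {x : ℕ → Bool} {r : ℕ → List Bool} (w : List Bool)
    (hx : IsLimitOf x r) : IsLimitOf (catInf w x) (fun m => w ++ r m) := by
  intro t
  rcases Nat.lt_or_ge t.length w.length with h | h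
  · rw [infPrefix_catInf_short (le_of_lt h)]
    constructor
    · intro h'
      exact Filter.Eventually.of_forall fun m => (prefix_append_short (le_of_lt h)).2 h'
    · intro h'
      obtain ⟨m, hm⟩ := h'.exists
      exact (prefix_append_short (le_of_lt h)).1 hm
  · rw [infPrefix_catInf_long h]
    constructor
    · rintro ⟨hw, hd⟩
      exact ((hx _).1 hd).mono fun m hm => (prefix_append_long h).2 ⟨hw, hm⟩
    · intro h'
      have h'' := h'.mono fun m hm => (prefix_append_long h).1 hm
      obtain ⟨m, hm⟩ := h''.exists
      exact ⟨hm.1, (hx _).2 (h''.mono fun m hm => hm.2)⟩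

lemma isLimitOf_congr {x : ℕ → Bool} {s s' : ℕ → List Bool}
    (h : ∀ᶠ m in Filter.atTop, s m = s' m) (hx : IsLimitOf x s) : IsLimitOf x s' := by
  intro t
  rw [hx t]
  exact Filter.eventually_congr (h.mono fun m hm => by rw [hm])

lemma isLimitOf_sub (c : ℕ) {x : ℕ → Bool} {s : ℕ → List Bool} (hx : IsLimitOf x s) :
    IsLimitOf x (fun m => s (m - c)) := by
  intro t
  rw [hx t]
  exact (eventually_sub_const c).symm

lemma wordPrefix_catInf {α : Type*} (s : List α) (β : ℕ → α) {m : ℕ} (h : s.length ≤ m) :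
    wordPrefix (catInf s β) m = s ++ wordPrefix β (m - s.length) := by
  apply List.ext_getElem
  · rw [wordPrefix_length, List.length_append, wordPrefix_length]; omega
  · intro i h1 h2
    rw [wordPrefix_getElem]
    rcases Nat.lt_or_ge i s.length with hi | hi
    · rw [List.getElem_append_left, catInf_lt s β hi]
    · rw [List.getElem_append_right hi, wordPrefix_getElem, catInf_ge s β hi]

/-- For every finite word `s ∈ T` and infinite word `β ∈ T`, `(sβ)^↩ = s^↩ β^↩`. -/
theorem eMap_cat (s : List (Fin 3)) (hs : s ∈ Tfin) (β : ℕ → Fin 3) (hβ : β ∈ Tinf) :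
    eMap (catInf s β) = catInf (eraseWord s) (eMap β) := by
  have hE : ∃ x, IsLimitOf x (fun m => eraseWord (wordPrefix β m)) := exists_limit hβ
  have heβ : IsLimitOf (eMap β) (fun m => eraseWord (wordPrefix β m)) := by
    unfold eMap
    rw [dif_pos hE]
    exact hE.choose_spec
  have hwit : IsLimitOf (catInf (eraseWord s) (eMap β))
      (fun m => eraseWord (wordPrefix (catInf s β) m)) := by
    have h2 := isLimitOf_cat (eraseWord s) (isLimitOf_sub s.length heβ)
    apply isLimitOf_congr _ h2
    refine Filter.eventually_atTop.2 ⟨s.length, fun m hm => ?_⟩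
    rw [wordPrefix_catInf s β hm, eraseWord_append_of_Tfin (wordPrefix_mem_Tfin hβ _)]
  have hex : ∃ x, IsLimitOf x (fun m => eraseWord (wordPrefix (catInf s β) m)) := ⟨_, hwit⟩
  calc eMap (catInf s β) = hex.choose := by unfold eMap; rw [dif_pos hex]
    _ = catInf (eraseWord s) (eMap β) := isLimitOf_unique hex.choose_spec hwit
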